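/- Let M ≥ 0, let x, y ∈ ℝ², and let u, v ∈ ℝ² satisfy ‖u‖ ≤ M and ‖v‖ ≤ M. Suppose that ‖(x + t·u) − (y + t·v)‖ ≥ 1 for every t ∈ ℝ. Then for all s, t ∈ ℝ, the Euclidean distance in ℝ³ = ℝ² × ℝ between the points (x + t·u, t) and (y + s·v, s) is at least 1/√(1 + M²). In particular, the worldlines L_x = {(x + t·u, t) : t ∈ ℝ} and L_y = {(y + s·v, s) : s ∈ ℝ} have Euclidean distance at least 1/√(1 + M²). -/

import Mathlib

/-- Space-time `ℝ³ = ℝ² × ℝ`, with the Euclidean norm `‖(p, t)‖ = √(‖p‖² + t²)`. -/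
noncomputable abbrev SpaceTime : Type :=
  WithLp 2 (EuclideanSpace ℝ (Fin 2) × ℝ)

/-- The space-time point `(p, t) ∈ ℝ² × ℝ`. -/
noncomputable def stPoint (p : EuclideanSpace ℝ (Fin 2)) (t : ℝ) : SpaceTime :=
  (WithLp.equiv 2 (EuclideanSpace ℝ (Fin 2) × ℝ)).symm (p, t)

/-- The worldline of a particle starting at `x` with velocity `u`. -/
noncomputable def worldline (x u : EuclideanSpace ℝ (Fin 2)) : Set SpaceTime :=
  {z : SpaceTime | ∃ t : ℝ, z = stPoint (x + t • u) t}

/-- If `‖u‖, ‖v‖ ≤ M` and the moving points `x + t·u`, `y + t·v` stay at distance at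
least `1` at all times, then any two points of the corresponding worldlines in
space-time are at Euclidean distance at least `1/√(1 + M²)`; in particular the
worldlines are at distance at least `1/√(1 + M²)`. -/
theorem worldlines_separated (M : ℝ) (hM : 0 ≤ M)
    (x y u v : EuclideanSpace ℝ (Fin 2)) (hu : ‖u‖ ≤ M) (hv : ‖v‖ ≤ M)
    (hsep : ∀ t : ℝ, ‖(x + t • u) - (y + t • v)‖ ≥ 1) :
    (∀ s t : ℝ, dist (stPoint (x + t • u) t) (stPoint (y + s • v) s) ≥
        1 / Real.sqrt (1 + M ^ 2)) ∧
    ∀ p ∈ worldline x u, ∀ q ∈ worldline y v,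
      dist p q ≥ 1 / Real.sqrt (1 + M ^ 2) := by
  have hM2 : (0:ℝ) < 1 + M ^ 2 := by positivity
  have main : ∀ s t : ℝ, dist (stPoint (x + t • u) t) (stPoint (y + s • v) s) ≥
      1 / Real.sqrt (1 + M ^ 2) := by
    intro s t
    set A := ‖(x + t • u) - (y + s • v)‖ with hAdef
    have hA0 : 0 ≤ A := norm_nonneg _
    have hA : A ≥ 1 - M * |t - s| := by
      have h1 : (x + t • u) - (y + s • v) = ((x + t • u) - (y + t • v)) + (t - s) • v := by
        module
      have h2 : ‖(t - s) • v‖ ≤ M * |t - s| := by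
        rw [norm_smul, Real.norm_eq_abs]
        have := abs_nonneg (t - s)
        nlinarith
      have h3 := hsep t
      have h4 : ‖(x + t • u) - (y + t • v)‖ ≤ A + ‖(t - s) • v‖ := by
        calc ‖(x + t • u) - (y + t • v)‖
            = ‖(((x + t • u) - (y + t • v)) + (t - s) • v) - (t - s) • v‖ := by
              congr 1; module
          _ ≤ ‖((x + t • u) - (y + t • v)) + (t - s) • v‖ + ‖(t - s) • v‖ := norm_sub_le _ _
          _ = A + ‖(t - s) • v‖ := by rw [hAdef, h1]
      linarith
    have e1 : (stPoint (x + t • u) t).fst = x + t • u := rfl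
    have e2 : (stPoint (x + t • u) t).snd = t := rfl
    have e3 : (stPoint (y + s • v) s).fst = y + s • v := rfl
    have e4 : (stPoint (y + s • v) s).snd = s := rfl
    have hdist : dist (stPoint (x + t • u) t) (stPoint (y + s • v) s)
        = Real.sqrt (A ^ 2 + (t - s) ^ 2) := by
      rw [WithLp.prod_dist_eq_of_L2, e1, e2, e3, e4, dist_eq_norm, Real.dist_eq, sq_abs]
    have habs : |t - s| ^ 2 = (t - s) ^ 2 := sq_abs _
    have hprod : (1:ℝ) ≤ (A ^ 2 + (t - s) ^ 2) * (1 + M ^ 2) := by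
      nlinarith [sq_nonneg (A * M - |t - s|), abs_nonneg (t - s),
        sq_nonneg (A + M * |t - s| - 1)]
    rw [hdist, ge_iff_le, div_le_iff₀ (Real.sqrt_pos.mpr hM2), ← Real.sqrt_mul (by positivity)]
    calc (1:ℝ) = Real.sqrt 1 := by simp
      _ ≤ _ := Real.sqrt_le_sqrt hprod
  refine ⟨main, ?_⟩
  rintro p ⟨t, rfl⟩ q ⟨s, rfl⟩
  exact main s t
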